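/- Scaling identity for Hermite polynomials: for any λ ∈ ℝ and n ∈ ℕ, H_n(λx) = Σ_{p=0}^{⌊n/2⌋} λ^{n-2p} (λ² - 1)^p · C(n, 2p) · (2p)!/p! · H_{n-2p}(x). -/

import Mathlib

noncomputable def H : ℕ → ℝ → ℝ
  | 0, _ => 1
  | 1, x => 2 * x
  | n + 2, x => 2 * x * H (n + 1) x - 2 * ((n : ℝ) + 1) * H n x

noncomputable def hermC (lam : ℝ) (n p : ℕ) : ℝ :=
  lam ^ (n - 2 * p) * (lam ^ 2 - 1) ^ p * (n.choose (2 * p) : ℝ)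
    * (((2 * p).factorial : ℝ) / (p.factorial : ℝ))

lemma hermC_zero (lam : ℝ) {n p : ℕ} (h : n < 2 * p) : hermC lam n p = 0 := by
  simp [hermC, Nat.choose_eq_zero_of_lt h]

lemma two_mul_H (y : ℝ) (m : ℕ) :
    2 * y * H m y = H (m + 1) y + 2 * (m : ℝ) * H (m - 1) y := by
  cases m with
  | zero => simp [H]
  | succ m =>
      have : H (m + 2) y = 2 * y * H (m + 1) y - 2 * ((m : ℝ) + 1) * H m y := by
        simp [H]
      simp only [Nat.add_sub_cancel]
      rw [this]
      push_cast
      ring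

lemma hermC_key (lam : ℝ) (n q : ℕ) :
    hermC lam (n + 2) (q + 1) = lam * hermC lam (n + 1) (q + 1)
      + 2 * lam * ((n + 1 - 2 * q : ℕ) : ℝ) * hermC lam (n + 1) q
      - 2 * ((n : ℝ) + 1) * hermC lam n q := by
  rcases le_or_gt (2 * q) n with h | h
  · obtain ⟨k, rfl⟩ : ∃ k, n = k + 2 * q := ⟨n - 2 * q, by omega⟩
    cases k with
    | zero =>
        simp only [Nat.zero_add, zero_add]
        rw [hermC_zero lam (by omega : 2 * q + 1 < 2 * (q + 1))]
        unfold hermC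
        simp only [show 2 * q + 2 - 2 * (q + 1) = 0 by omega,
          show 2 * q + 1 - 2 * q = 1 by omega,
          show 2 * q - 2 * q = 0 by omega,
          show ((2 * q + 1 - 2 * q : ℕ) : ℝ) = 1 by norm_num,
          pow_zero, pow_one]
        rw [Nat.cast_choose ℝ (by omega : 2 * (q + 1) ≤ 2 * q + 2),
          Nat.cast_choose ℝ (by omega : 2 * q ≤ 2 * q + 1),
          Nat.cast_choose ℝ (le_refl (2 * q))]
        simp only [show 2 * q + 2 - 2 * (q + 1) = 0 by omega,
          show 2 * q + 1 - 2 * q = 1 by omega,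
          show 2 * q - 2 * q = 0 by omega,
          show 2 * (q + 1) = 2 * q + 1 + 1 by omega, Nat.factorial_succ,
          Nat.factorial_zero, Nat.factorial_one, Nat.sub_self]
        push_cast
        have hq : (q.factorial : ℝ) ≠ 0 := Nat.cast_ne_zero.mpr q.factorial_ne_zero
        have h2q : ((2 * q).factorial : ℝ) ≠ 0 := Nat.cast_ne_zero.mpr (2 * q).factorial_ne_zero
        field_simp
        ring
    | succ k =>
        unfold hermC
        simp only [show k + 1 + 2 * q + 2 - 2 * (q + 1) = k + 1 by omega,
          show k + 1 + 2 * q + 1 - 2 * (q + 1) = k by omega,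
          show k + 1 + 2 * q + 1 - 2 * q = k + 2 by omega,
          show k + 1 + 2 * q - 2 * q = k + 1 by omega]
        rw [Nat.cast_choose ℝ (by omega : 2 * (q + 1) ≤ k + 1 + 2 * q + 2),
          Nat.cast_choose ℝ (by omega : 2 * (q + 1) ≤ k + 1 + 2 * q + 1),
          Nat.cast_choose ℝ (by omega : 2 * q ≤ k + 1 + 2 * q + 1),
          Nat.cast_choose ℝ (by omega : 2 * q ≤ k + 1 + 2 * q)]
        simp only [show k + 1 + 2 * q + 2 - 2 * (q + 1) = k + 1 by omega,
          show k + 1 + 2 * q + 1 - 2 * (q + 1) = k by omega,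
          show k + 1 + 2 * q + 1 - 2 * q = k + 2 by omega,
          show k + 1 + 2 * q - 2 * q = k + 1 by omega]
        simp only [show k + 1 + 2 * q + 2 = (k + 2 * q + 2) + 1 by omega,
          show k + 1 + 2 * q + 1 = (k + 2 * q + 1) + 1 by omega,
          show k + 2 * q + 2 = (k + 2 * q + 1) + 1 by omega,
          show k + 1 + 2 * q = (k + 2 * q) + 1 by omega,
          show k + 2 * q + 1 = (k + 2 * q) + 1 by omega,
          show 2 * (q + 1) = (2 * q + 1) + 1 by omega,
          show (2 * q + 1) = (2 * q) + 1 by omega,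
          Nat.factorial_succ]
        push_cast
        have hq : (q.factorial : ℝ) ≠ 0 := Nat.cast_ne_zero.mpr q.factorial_ne_zero
        have h2q : ((2 * q).factorial : ℝ) ≠ 0 := Nat.cast_ne_zero.mpr (2 * q).factorial_ne_zero
        have hk : (k.factorial : ℝ) ≠ 0 := Nat.cast_ne_zero.mpr k.factorial_ne_zero
        field_simp
        ring
  · rcases eq_or_lt_of_le (by omega : n + 1 ≤ 2 * q) with h' | h'
    · rw [hermC_zero lam (by omega : n + 2 < 2 * (q + 1)),
        hermC_zero lam (by omega : n + 1 < 2 * (q + 1)),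
        hermC_zero lam (by omega : n < 2 * q),
        show ((n + 1 - 2 * q : ℕ) : ℝ) = 0 by rw [show n + 1 - 2 * q = 0 by omega]; norm_num]
      ring
    · rw [hermC_zero lam (by omega : n + 2 < 2 * (q + 1)),
        hermC_zero lam (by omega : n + 1 < 2 * (q + 1)),
        hermC_zero lam (by omega : n + 1 < 2 * q),
        hermC_zero lam (by omega : n < 2 * q)]
      ring

lemma herm_aux (lam x : ℝ) : ∀ n : ℕ,
    H n (lam * x) = ∑ p ∈ Finset.range (n + 1), hermC lam n p * H (n - 2 * p) x := by
  have step : ∀ n : ℕ,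
      H n (lam * x) = ∑ p ∈ Finset.range (n + 1), hermC lam n p * H (n - 2 * p) x →
      H (n + 1) (lam * x) = ∑ p ∈ Finset.range (n + 2), hermC lam (n + 1) p * H (n + 1 - 2 * p) x →
      H (n + 2) (lam * x) = ∑ p ∈ Finset.range (n + 3), hermC lam (n + 2) p * H (n + 2 - 2 * p) x := by
    intro n h0 h1
    have h0' : H n (lam * x) = ∑ p ∈ Finset.range (n + 3), hermC lam n p * H (n - 2 * p) x := by
      rw [h0]
      apply Finset.sum_subset (Finset.range_subset_range.mpr (by omega))
      intro p hp hnp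
      rw [hermC_zero lam (by simp [Finset.mem_range] at hp hnp ⊢; omega), zero_mul]
    have h1' : H (n + 1) (lam * x)
        = ∑ p ∈ Finset.range (n + 3), hermC lam (n + 1) p * H (n + 1 - 2 * p) x := by
      rw [h1]
      apply Finset.sum_subset (Finset.range_subset_range.mpr (by omega))
      intro p hp hnp
      rw [hermC_zero lam (by simp [Finset.mem_range] at hp hnp ⊢; omega), zero_mul]
    have hH : H (n + 2) (lam * x)
        = 2 * (lam * x) * H (n + 1) (lam * x) - 2 * ((n : ℝ) + 1) * H n (lam * x) := by
      simp [H]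
    rw [hH, h0', h1', Finset.mul_sum, Finset.mul_sum, ← Finset.sum_sub_distrib]
    have main : ∀ p ∈ Finset.range (n + 3),
        2 * (lam * x) * (hermC lam (n + 1) p * H (n + 1 - 2 * p) x)
          - 2 * ((n : ℝ) + 1) * (hermC lam n p * H (n - 2 * p) x)
        = lam * hermC lam (n + 1) p * H (n + 2 - 2 * p) x
          + (2 * lam * ((n + 1 - 2 * p : ℕ) : ℝ) * hermC lam (n + 1) p
              - 2 * ((n : ℝ) + 1) * hermC lam n p) * H (n - 2 * p) x := by
      intro p _
      rcases le_or_gt (2 * p) (n + 1) with hp | hp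
      · have h2 := two_mul_H x (n + 1 - 2 * p)
        rw [show n + 1 - 2 * p + 1 = n + 2 - 2 * p by omega,
          show n + 1 - 2 * p - 1 = n - 2 * p by omega] at h2
        linear_combination (lam * hermC lam (n + 1) p) * h2
      · rw [hermC_zero lam (by omega : n + 1 < 2 * p),
          hermC_zero lam (by omega : n < 2 * p)]
        ring
    rw [Finset.sum_congr rfl main, Finset.sum_add_distrib]
    have hB : ∑ p ∈ Finset.range (n + 3),
        (2 * lam * ((n + 1 - 2 * p : ℕ) : ℝ) * hermC lam (n + 1) p
          - 2 * ((n : ℝ) + 1) * hermC lam n p) * H (n - 2 * p) x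
        = ∑ p ∈ Finset.range (n + 2),
        (2 * lam * ((n + 1 - 2 * p : ℕ) : ℝ) * hermC lam (n + 1) p
          - 2 * ((n : ℝ) + 1) * hermC lam n p) * H (n - 2 * p) x := by
      rw [Finset.sum_range_succ,
        hermC_zero lam (by omega : n + 1 < 2 * (n + 2)),
        hermC_zero lam (by omega : n < 2 * (n + 2))]
      ring
    rw [hB]
    rw [show (n + 3) = (n + 2) + 1 from rfl,
      Finset.sum_range_succ' (fun p => lam * hermC lam (n + 1) p * H (n + 2 - 2 * p) x) (n + 2),
      Finset.sum_range_succ' (fun p => hermC lam (n + 2) p * H (n + 2 - 2 * p) x) (n + 2)]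
    rw [add_assoc, add_comm _ (∑ p ∈ Finset.range (n + 2),
        (2 * lam * ((n + 1 - 2 * p : ℕ) : ℝ) * hermC lam (n + 1) p
          - 2 * ((n : ℝ) + 1) * hermC lam n p) * H (n - 2 * p) x), ← add_assoc,
      ← Finset.sum_add_distrib]
    congr 1
    · apply Finset.sum_congr rfl
      intro q _
      rw [show n + 2 - 2 * (q + 1) = n - 2 * q by omega]
      rw [hermC_key lam n q]
      ring
    · simp only [hermC, Nat.mul_zero, Nat.sub_zero, pow_zero, Nat.choose_zero_right,
        Nat.cast_one, Nat.factorial_zero, div_one, mul_one, one_mul]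
      ring
  have main : ∀ n : ℕ,
      (H n (lam * x) = ∑ p ∈ Finset.range (n + 1), hermC lam n p * H (n - 2 * p) x) ∧
      (H (n + 1) (lam * x) = ∑ p ∈ Finset.range (n + 2), hermC lam (n + 1) p * H (n + 1 - 2 * p) x) := by
    intro n
    induction n with
    | zero =>
        constructor
        · simp [H, hermC]
        · rw [Finset.sum_range_succ, Finset.sum_range_succ]
          simp [H, hermC]
          ring
    | succ n ih => exact ⟨ih.2, step n ih.1 ih.2⟩
  exact fun n => (main n).1

theorem hermite_scaling (lam : ℝ) (n : ℕ) (x : ℝ) :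
    H n (lam * x) = ∑ p ∈ Finset.range (n / 2 + 1),
      lam ^ (n - 2 * p) * (lam ^ 2 - 1) ^ p * (n.choose (2 * p) : ℝ)
        * (((2 * p).factorial : ℝ) / (p.factorial : ℝ)) * H (n - 2 * p) x := by
  rw [herm_aux lam x n]
  apply (Finset.sum_subset (Finset.range_subset_range.mpr (by omega)) ?_).symm
  intro p hp hnp
  rw [hermC_zero lam (by simp [Finset.mem_range] at hp hnp ⊢; omega), zero_mul]
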